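/- Let F be a field, let P ∈ F[X_1,...,X_m], let a, b ∈ F^m, and let l be a vector of nonnegative integers. Define the univariate polynomial Q_l(T) = P^{(l)}(a + b·T) ∈ F[T] (substituting X_k = a_k + b_k·T in P^{(l)}). Then for every nonnegative integer j, the coefficient of T^j in Q_l(T) equals Σ_{i : wt(i) = j} binom(l+i, l) · P^{(l+i)}(a) · b^i. -/

import Mathlib

/-- The Hasse derivative of a multivariate polynomial `P` with respect to the index
vector `i : Fin m → ℕ`: the coefficient of `Z^i` in `P(X + Z)`. -/
noncomputable def mvHasseDeriv {F : Type*} [CommSemiring F] {m : ℕ}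
    (i : Fin m → ℕ) (P : MvPolynomial (Fin m) F) : MvPolynomial (Fin m) F :=
  MvPolynomial.coeff (Finsupp.equivFunOnFinite.symm i)
    (MvPolynomial.eval₂ (MvPolynomial.C.comp MvPolynomial.C)
      (fun k => MvPolynomial.C (MvPolynomial.X k) + MvPolynomial.X k) P)

/-- The multiplicity of `P` at a point `a`: the largest `M` (possibly `⊤`) such that
all Hasse derivatives of `P` of weight `< M` vanish at `a`. -/
noncomputable def mvMult {F : Type*} [CommSemiring F] {m : ℕ}
    (P : MvPolynomial (Fin m) F) (a : Fin m → F) : ℕ∞ :=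
  sSup {M : ℕ∞ | ∀ i : Fin m → ℕ, ((∑ k, i k : ℕ) : ℕ∞) < M →
    MvPolynomial.eval a (mvHasseDeriv i P) = 0}

namespace CoeffRestrictionAux

open MvPolynomial Finset

variable {F : Type*} [CommSemiring F] {m : ℕ}

/-- `P ↦ P(X + Z)` as a ring hom. -/
noncomputable def hasseE : MvPolynomial (Fin m) F →+* MvPolynomial (Fin m) (MvPolynomial (Fin m) F) :=
  eval₂Hom (C.comp C) (fun k => C (X k) + X k)

lemma mvHasseDeriv_eq (i : Fin m → ℕ) (P : MvPolynomial (Fin m) F) :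
    mvHasseDeriv i P = coeff (Finsupp.equivFunOnFinite.symm i) (hasseE P) := rfl

lemma factor_expand (k : Fin m) (n : ℕ) :
    (C (X k) + X k : MvPolynomial (Fin m) (MvPolynomial (Fin m) F)) ^ n =
      ∑ s ∈ range (n + 1),
        C (monomial (Finsupp.single k (n - s)) ((n.choose s : F))) * X k ^ s := by
  rw [add_comm, add_pow]
  refine Finset.sum_congr rfl fun s _ => ?_
  rw [monomial_eq, Finsupp.prod_single_index (by simp)]
  simp only [map_mul, map_pow, map_natCast]
  ring

lemma prod_monomial {σ R κ : Type*} [CommSemiring R] (s : Finset κ) (d : κ → σ →₀ ℕ) (r : κ → R) :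
    ∏ k ∈ s, (monomial (d k) (r k) : MvPolynomial σ R) = monomial (∑ k ∈ s, d k) (∏ k ∈ s, r k) := by
  classical
  induction s using Finset.induction with
  | empty => simp [monomial_zero']
  | insert a s h ih =>
    rw [Finset.prod_insert h, Finset.prod_insert h, Finset.sum_insert h, ih, monomial_mul]

lemma sum_single_eq (s : Fin m → ℕ) :
    (∑ k, Finsupp.single k (s k)) = Finsupp.equivFunOnFinite.symm s := by
  ext k'
  simp [Finsupp.single_apply, Finsupp.finset_sum_apply]

lemma hasseE_monomial (d : Fin m →₀ ℕ) (c : F) :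
    hasseE (monomial d c) =
      ∑ s ∈ Fintype.piFinset (fun k => range (d k + 1)),
        C (monomial (∑ k, Finsupp.single k (d k - s k)) (((∏ k, (d k).choose (s k) : ℕ) : F) * c)) *
          ∏ k, (X k : MvPolynomial (Fin m) (MvPolynomial (Fin m) F)) ^ s k := by
  rw [hasseE, eval₂Hom_monomial]
  rw [Finsupp.prod_fintype _ _ (fun k => pow_zero _)]
  simp only [factor_expand]
  rw [Finset.prod_univ_sum]
  rw [Finset.mul_sum]
  refine Finset.sum_congr rfl fun s _ => ?_
  rw [Finset.prod_mul_distrib, ← map_prod, prod_monomial]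
  rw [← mul_assoc]
  simp only [RingHom.comp_apply, ← map_mul, C_mul_monomial, Nat.cast_prod, mul_comm c]

lemma mvHasseDeriv_monomial (i : Fin m → ℕ) (d : Fin m →₀ ℕ) (c : F) :
    mvHasseDeriv i (monomial d c) =
      monomial (d - Finsupp.equivFunOnFinite.symm i) (((∏ k, (d k).choose (i k) : ℕ) : F) * c) := by
  rw [mvHasseDeriv_eq, hasseE_monomial]
  have hX : ∀ s : Fin m → ℕ,
      (∏ k, (X k : MvPolynomial (Fin m) (MvPolynomial (Fin m) F)) ^ s k) =
        monomial (Finsupp.equivFunOnFinite.symm s) 1 := by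
    intro s
    simp only [X_pow_eq_monomial, prod_monomial, Finset.prod_const_one, sum_single_eq]
  simp only [hX, coeff_sum, coeff_C_mul, coeff_monomial, mul_ite, mul_one, mul_zero,
    EmbeddingLike.apply_eq_iff_eq]
  rw [Finset.sum_ite_eq']
  by_cases hi : i ∈ Fintype.piFinset (fun k => range (d k + 1))
  · rw [if_pos hi]
    have hE : (∑ k, Finsupp.single k (d k - i k)) = d - Finsupp.equivFunOnFinite.symm i := by
      rw [sum_single_eq]
      ext k'
      rw [Finsupp.tsub_apply]
      rfl
    rw [hE]
  · rw [if_neg hi]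
    simp only [Fintype.mem_piFinset, mem_range, not_forall] at hi
    obtain ⟨k, hk⟩ := hi
    have : (d k).choose (i k) = 0 := Nat.choose_eq_zero_of_lt (by omega)
    rw [Finset.prod_eq_zero (Finset.mem_univ k) this]
    simp

lemma mvHasseDeriv_add (i : Fin m → ℕ) (P Q : MvPolynomial (Fin m) F) :
    mvHasseDeriv i (P + Q) = mvHasseDeriv i P + mvHasseDeriv i Q := by
  simp [mvHasseDeriv_eq, map_add, coeff_add]

lemma choose_helper (d l i : ℕ) :
    d.choose l * (d - l).choose i = (l + i).choose l * d.choose (l + i) := by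
  rcases le_or_gt (l + i) d with h | h
  · have := Nat.choose_mul (n := d) (Nat.le_add_right l i)
    rw [Nat.add_sub_cancel_left] at this
    rw [← this, mul_comm]
  · have h1 : d.choose (l + i) = 0 := Nat.choose_eq_zero_of_lt h
    rcases le_or_gt l d with h2 | h2
    · have : d - l < i := by omega
      rw [Nat.choose_eq_zero_of_lt this, h1]; ring
    · rw [Nat.choose_eq_zero_of_lt h2, h1]; ring

lemma mvHasseDeriv_comp (l i : Fin m → ℕ) (P : MvPolynomial (Fin m) F) :
    mvHasseDeriv i (mvHasseDeriv l P) =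
      C ((∏ k, (l k + i k).choose (l k) : ℕ) : F) * mvHasseDeriv (l + i) P := by
  induction P using MvPolynomial.induction_on' with
  | add p q hp hq => rw [mvHasseDeriv_add, mvHasseDeriv_add, hp, hq, mvHasseDeriv_add, mul_add]
  | monomial d c =>
    simp only [mvHasseDeriv_monomial, C_mul_monomial]
    have he : d - Finsupp.equivFunOnFinite.symm l - Finsupp.equivFunOnFinite.symm i =
        d - Finsupp.equivFunOnFinite.symm (l + i) := by
      ext k; simp [Finsupp.tsub_apply]; omega
    rw [he]
    congr 1
    push_cast
    rw [← mul_assoc, ← mul_assoc, ← Finset.prod_mul_distrib, ← Finset.prod_mul_distrib]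
    congr 1
    refine Finset.prod_congr rfl fun k _ => ?_
    have h1 : ((⇑d - ⇑(Finsupp.equivFunOnFinite.symm l)) k : ℕ) = d k - l k := rfl
    rw [h1]
    have h2 : (l + i) k = l k + i k := rfl
    rw [h2, mul_comm, ← Nat.cast_mul, ← Nat.cast_mul, choose_helper]

/-- `R(X,Z) ↦ R(a, b·T)` as a ring hom. -/
noncomputable def hassePhi (a b : Fin m → F) :
    MvPolynomial (Fin m) (MvPolynomial (Fin m) F) →+* Polynomial F :=
  eval₂Hom (Polynomial.C.comp (MvPolynomial.eval a)) (fun k => Polynomial.C (b k) * Polynomial.X)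

lemma aeval_line_eq (a b : Fin m → F) (Q : MvPolynomial (Fin m) F) :
    MvPolynomial.aeval (fun k => Polynomial.C (a k) + Polynomial.C (b k) * Polynomial.X) Q
      = hassePhi a b (hasseE Q) := by
  have h : ((hassePhi a b).comp hasseE : MvPolynomial (Fin m) F →+* Polynomial F)
      = ↑(MvPolynomial.aeval (R := F)
          (fun k => Polynomial.C (a k) + Polynomial.C (b k) * Polynomial.X)) := by
    apply MvPolynomial.ringHom_ext
    · intro c; simp [hassePhi, hasseE]
    · intro k; simp [hassePhi, hasseE]
  exact (DFunLike.congr_fun h Q).symm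

lemma coeff_hassePhi (a b : Fin m → F) (j : ℕ) (R : MvPolynomial (Fin m) (MvPolynomial (Fin m) F)) :
    (hassePhi a b R).coeff j =
      ∑ i ∈ Finset.Nat.antidiagonalTuple m j,
        MvPolynomial.eval a (coeff (Finsupp.equivFunOnFinite.symm i) R) * ∏ k, b k ^ i k := by
  induction R using MvPolynomial.induction_on' with
  | add p q hp hq =>
    simp only [map_add, Polynomial.coeff_add, coeff_add, hp, hq, ← Finset.sum_add_distrib, add_mul]
  | monomial D r =>
    have hL : hassePhi a b (monomial D r)
        = Polynomial.C (MvPolynomial.eval a r * ∏ k, b k ^ D k) * Polynomial.X ^ (∑ k, D k) := by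
      rw [hassePhi, eval₂Hom_monomial, Finsupp.prod_fintype _ _ (fun k => pow_zero _)]
      simp only [mul_pow, Finset.prod_mul_distrib, ← map_pow, ← map_prod,
        Finset.prod_pow_eq_pow_sum, RingHom.comp_apply, map_mul]
      ring
    rw [hL]
    rw [Polynomial.coeff_C_mul, Polynomial.coeff_X_pow]
    have hR : ∀ i ∈ Finset.Nat.antidiagonalTuple m j,
        MvPolynomial.eval a (coeff (Finsupp.equivFunOnFinite.symm i) (monomial D r)) *
            ∏ k, b k ^ i k
          = if i = ⇑D then MvPolynomial.eval a r * ∏ k, b k ^ i k else 0 := by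
      intro i _
      rw [coeff_monomial]
      have : (D = Finsupp.equivFunOnFinite.symm i) ↔ (i = ⇑D) := by
        rw [eq_comm, Equiv.symm_apply_eq]; rfl
      by_cases h : i = ⇑D <;> simp [this, h]
    rw [Finset.sum_congr rfl hR, Finset.sum_ite_eq' _ (⇑D)]
    by_cases h : (∑ k, D k) = j
    · rw [if_pos h.symm, if_pos (Finset.Nat.mem_antidiagonalTuple.mpr h), mul_one]
    · rw [if_neg (fun hh => h hh.symm),
        if_neg (fun hmem => h (Finset.Nat.mem_antidiagonalTuple.mp hmem)), mul_zero]

end CoeffRestrictionAux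

open CoeffRestrictionAux in
/-- **Coefficients of the restriction of a derivative to a line.**
For `Q_l(T) = P^{(l)}(a + b·T)`, the coefficient of `T^j` in `Q_l` equals
`∑_{i : wt(i) = j} binom(l+i, l) · P^{(l+i)}(a) · b^i`. -/
theorem coeff_restriction_to_line {F : Type*} [Field F] {m : ℕ}
    (P : MvPolynomial (Fin m) F) (a b : Fin m → F) (l : Fin m → ℕ) (j : ℕ) :
    (MvPolynomial.aeval
        (fun k => Polynomial.C (a k) + Polynomial.C (b k) * Polynomial.X)
        (mvHasseDeriv l P)).coeff j =
      ∑ i ∈ Finset.Nat.antidiagonalTuple m j,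
        ((∏ k, (l k + i k).choose (l k) : ℕ) : F) *
          MvPolynomial.eval a (mvHasseDeriv (l + i) P) * ∏ k, b k ^ i k := by
  rw [aeval_line_eq, coeff_hassePhi]
  refine Finset.sum_congr rfl fun i hi => ?_
  rw [← mvHasseDeriv_eq, mvHasseDeriv_comp, map_mul, MvPolynomial.eval_C]
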